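/- Let A be an n×n complex matrix and Â = [[γA, (1−γ)A],[I, 0]]. If (λ̂, [v₁; v₂]) is an eigenpair of Â with λ̂ ≠ 0 and γλ̂ + 1 − γ ≠ 0, then v₂ is an eigenvector of A with eigenvalue λ̂²/(γλ̂ + 1 − γ), and v₁ = λ̂ v₂. -/

import Mathlib

open Matrix

theorem stmt_1 (n : ℕ) (A : Matrix (Fin n) (Fin n) ℂ) (γ : ℝ)
    (Ahat : Matrix (Fin n ⊕ Fin n) (Fin n ⊕ Fin n) ℂ)
    (hAhat : Ahat = Matrix.fromBlocks ((γ : ℂ) • A) ((1 - (γ : ℂ)) • A) 1 0)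
    (lamhat : ℂ) (v₁ v₂ : Fin n → ℂ)
    (hv : Sum.elim v₁ v₂ ≠ 0)
    (heig : Ahat.mulVec (Sum.elim v₁ v₂) = lamhat • Sum.elim v₁ v₂)
    (hlam : lamhat ≠ 0) (hden : (γ : ℂ) * lamhat + 1 - (γ : ℂ) ≠ 0) :
    v₂ ≠ 0 ∧
      A.mulVec v₂ = (lamhat ^ 2 / ((γ : ℂ) * lamhat + 1 - (γ : ℂ))) • v₂ ∧
      v₁ = lamhat • v₂ := by
  subst hAhat
  rw [Matrix.fromBlocks_mulVec] at heig
  have h1 : ((γ : ℂ) • A).mulVec v₁ + ((1 - (γ : ℂ)) • A).mulVec v₂ = lamhat • v₁ := by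
    funext i; exact congrFun heig (Sum.inl i)
  have h2 : v₁ = lamhat • v₂ := by
    funext i
    have := congrFun heig (Sum.inr i)
    simpa using this
  have hv2 : v₂ ≠ 0 := by
    intro h0
    apply hv
    have : v₁ = 0 := by simp [h2, h0]
    simp [this, h0]
  refine ⟨hv2, ?_, h2⟩
  rw [h2] at h1
  have key : ((γ : ℂ) * lamhat + 1 - (γ : ℂ)) • A.mulVec v₂ = (lamhat ^ 2) • v₂ := by
    have := h1
    rw [Matrix.smul_mulVec, Matrix.smul_mulVec, Matrix.mulVec_smul] at this
    rw [smul_smul] at this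
    funext i
    have := congrFun this i
    simp only [Pi.add_apply, Pi.smul_apply, smul_eq_mul] at this ⊢
    ring_nf at this ⊢
    linear_combination this
  funext i
  have := congrFun key i
  simp only [Pi.smul_apply, smul_eq_mul] at this ⊢
  rw [div_mul_eq_mul_div, eq_div_iff hden]
  linear_combination this
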